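/- For any two permutations X, Y of {1,...,n}, the squared distance Σ_{i=1}^n (log X_i − log Y_i)² is at most Σ_{i=1}^n (log i − log(n+1−i))², with equality if and only if Y_i = n+1−X_i for all i (Y is the reversal of X). -/

import Mathlib

/-- A strictly monotone permutation of `Fin n` is the identity. -/
lemma perm_strictMono_eq_one {n : ℕ} (π : Equiv.Perm (Fin n)) (h : StrictMono ⇑π) :
    π = 1 := by
  have key : ∀ (τ : Equiv.Perm (Fin n)), StrictMono ⇑τ → ∀ i : Fin n, (i : ℕ) ≤ (τ i : ℕ) := by
    intro τ hτ
    have : ∀ k : ℕ, ∀ i : Fin n, (i : ℕ) = k → k ≤ (τ i : ℕ) := by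
      intro k
      induction k with
      | zero => intro i _; exact Nat.zero_le _
      | succ m ih =>
        intro i hi
        have hin := i.is_lt
        have hm : m < n := by omega
        set j : Fin n := ⟨m, hm⟩ with hj
        have hji : j < i := by
          rw [Fin.lt_def]; simp [hj, hi]
        have h1 : (τ j : ℕ) < (τ i : ℕ) := by
          have := hτ hji
          exact this
        have h2 : m ≤ (τ j : ℕ) := ih j rfl
        omega
    intro i; exact this (i : ℕ) i rfl
  have hinv : StrictMono ⇑π⁻¹ := by
    intro a b hab
    have : π (π⁻¹ a) < π (π⁻¹ b) := by simp [hab]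
    exact (h.lt_iff_lt).1 this
  ext i
  have h1 : (i : ℕ) ≤ (π i : ℕ) := key π h i
  have h2 : ((π i : Fin n) : ℕ) ≤ (π⁻¹ (π i) : ℕ) := key π⁻¹ hinv (π i)
  simp only [Equiv.Perm.inv_def, Equiv.symm_apply_apply] at h2
  simp only [Equiv.Perm.one_apply]
  omega

/-- The squared `τ` distance between two rankings is at most
`∑_{i=1}^n (log i − log(n+1−i))²`, with equality iff `Y` is the reversal of `X`
(ranks `(X i)+1` and `(Y i)+1` sum to `n+1`). -/
theorem tau_sq_le_max (n : ℕ) (X Y : Equiv.Perm (Fin n)) :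
    (∑ i : Fin n, (Real.log ((X i : ℕ) + 1) - Real.log ((Y i : ℕ) + 1)) ^ 2
      ≤ ∑ i : Fin n, (Real.log ((i : ℕ) + 1) - Real.log ((n : ℝ) - (i : ℕ))) ^ 2) ∧
    ((∑ i : Fin n, (Real.log ((X i : ℕ) + 1) - Real.log ((Y i : ℕ) + 1)) ^ 2
      = ∑ i : Fin n, (Real.log ((i : ℕ) + 1) - Real.log ((n : ℝ) - (i : ℕ))) ^ 2)
      ↔ ∀ i : Fin n, (X i : ℕ) + (Y i : ℕ) + 1 = n) := by
  classical
  set f : Fin n → ℝ := fun i => Real.log ((i : ℕ) + 1) with hf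
  set g : Fin n → ℝ := fun i => Real.log ((n : ℝ) - (i : ℕ)) with hg
  -- g k = f (rev k) and g (rev k) = f k
  have hcast : ∀ k : Fin n, ((Fin.rev k : ℕ) : ℝ) = (n : ℝ) - (k : ℕ) - 1 := by
    intro k
    have hk := k.is_lt
    rw [Fin.val_rev]
    have : ((n - (k.val + 1) : ℕ) : ℝ) = (n : ℝ) - ((k.val + 1 : ℕ) : ℝ) :=
      Nat.cast_sub (by omega)
    rw [this]; push_cast; ring
  have hfrev : ∀ k : Fin n, f (Fin.rev k) = g k := by
    intro k; simp only [hf, hg, hcast k]; ring_nf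
  have hgrev : ∀ k : Fin n, g (Fin.rev k) = f k := by
    intro k
    have := hfrev (Fin.rev k)
    rw [Fin.rev_rev] at this
    exact this.symm
  -- f is strictly monotone
  have hmono : StrictMono f := by
    intro a b hab
    apply Real.log_lt_log (by positivity)
    have : (a : ℕ) < (b : ℕ) := hab
    have h1 : ((a:ℕ):ℝ) < ((b:ℕ):ℝ) := by exact_mod_cast this
    linarith
  -- f and g antivary
  have hA : Antivary f g := by
    intro i j hij
    rw [← hfrev i, ← hfrev j] at hij
    have : Fin.rev i < Fin.rev j := hmono.lt_iff_lt.1 hij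
    have hji : j < i := by
      rwa [Fin.rev_lt_rev] at this
    exact (hmono hji).le
  set σ : Equiv.Perm (Fin n) := X.symm.trans Y with hσ
  set π : Equiv.Perm (Fin n) := σ.trans Fin.revPerm with hπ
  have hπ_apply : ∀ i, π i = Fin.rev (σ i) := fun i => rfl
  have hσX : ∀ i, σ (X i) = Y i := by intro i; simp [hσ]
  have hgπ : ∀ i, g (π i) = f (σ i) := by
    intro i; rw [hπ_apply, hgrev]
  -- sum identities
  have hsum_sq : ∀ e : Equiv.Perm (Fin n), ∑ i, f (e i) ^ 2 = ∑ i, f i ^ 2 :=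
    fun e => Equiv.sum_comp e (fun i => f i ^ 2)
  have hgsq : ∑ i, g i ^ 2 = ∑ i, f i ^ 2 := by
    rw [← Equiv.sum_comp Fin.revPerm (fun i => g i ^ 2)]
    exact Finset.sum_congr rfl fun i _ => by rw [show Fin.revPerm i = Fin.rev i from rfl, hgrev]
  have hLHS : ∑ i : Fin n, (f (X i) - f (Y i)) ^ 2
      = 2 * ∑ i, f i ^ 2 - 2 * ∑ i, f i * g (π i) := by
    have h1 : ∑ i : Fin n, (f (X i) - f (Y i)) ^ 2 = ∑ i : Fin n, (f i - f (σ i)) ^ 2 := by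
      rw [← Equiv.sum_comp X (fun i => (f i - f (σ i)) ^ 2)]
      exact Finset.sum_congr rfl fun i _ => by rw [hσX]
    rw [h1]
    have h2 : ∑ i : Fin n, (f i - f (σ i)) ^ 2
        = ∑ i, f i ^ 2 + ∑ i, f (σ i) ^ 2 - 2 * ∑ i, f i * f (σ i) := by
      rw [← Finset.sum_add_distrib, Finset.mul_sum, ← Finset.sum_sub_distrib]
      exact Finset.sum_congr rfl fun i _ => by ring
    rw [h2, hsum_sq σ]
    have h3 : ∑ i, f i * f (σ i) = ∑ i, f i * g (π i) :=
      Finset.sum_congr rfl fun i _ => by rw [hgπ]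
    rw [h3]; ring
  have hRHS : ∑ i : Fin n, (f i - g i) ^ 2
      = 2 * ∑ i, f i ^ 2 - 2 * ∑ i, f i * g i := by
    have h2 : ∑ i : Fin n, (f i - g i) ^ 2
        = ∑ i, f i ^ 2 + ∑ i, g i ^ 2 - 2 * ∑ i, f i * g i := by
      rw [← Finset.sum_add_distrib, Finset.mul_sum, ← Finset.sum_sub_distrib]
      exact Finset.sum_congr rfl fun i _ => by ring
    rw [h2, hgsq]; ring
  have hineq : ∑ i, f i * g i ≤ ∑ i, f i * g (π i) :=
    hA.sum_mul_le_sum_mul_comp_perm (σ := π)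
  constructor
  · rw [hLHS, hRHS]; linarith
  · constructor
    · -- equality → reversal
      intro heq
      rw [hLHS, hRHS] at heq
      have hsums : ∑ i, f i * g (π i) = ∑ i, f i * g i := by linarith
      have hAπ : Antivary f (g ∘ ⇑π) := (hA.sum_mul_eq_sum_mul_comp_perm_iff (σ := π)).1 hsums
      -- π is strictly monotone
      have hπmono : StrictMono ⇑π := by
        intro i j hij
        have hfij : f i < f j := hmono hij
        have hle : g (π j) ≤ g (π i) := by
          by_contra hc
          push_neg at hc
          exact absurd (hAπ hc) (not_le.2 hfij)
        rw [← hfrev (π i), ← hfrev (π j)] at hle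
        have : Fin.rev (π j) ≤ Fin.rev (π i) := hmono.le_iff_le.1 hle
        have hle2 : π i ≤ π j := by rwa [Fin.rev_le_rev] at this
        have hne : π i ≠ π j := fun h => (ne_of_lt hij) (π.injective h)
        exact lt_of_le_of_ne hle2 hne
      have hπ1 : π = 1 := perm_strictMono_eq_one π hπmono
      intro i
      have : π (X i) = X i := by rw [hπ1]; rfl
      rw [hπ_apply, hσX] at this
      have hYX : Y i = Fin.rev (X i) := by
        have := congrArg Fin.rev this
        rwa [Fin.rev_rev] at this
      have hXlt := (X i).is_lt
      have : (Y i : ℕ) = n - ((X i : ℕ) + 1) := by rw [hYX, Fin.val_rev]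
      omega
    · -- reversal → equality
      intro h
      have hfY : ∀ i, f (Y i) = g (X i) := by
        intro i
        have hi := h i
        have hXlt := (X i).is_lt
        simp only [hf, hg]
        congr 1
        have : ((Y i : ℕ) : ℝ) = (n : ℝ) - ((X i : ℕ) : ℝ) - 1 := by
          have : (Y i : ℕ) + 1 + (X i : ℕ) = n := by omega
          have := congrArg (fun m : ℕ => (m : ℝ)) this
          push_cast at this
          linarith
        rw [this]; ring
      calc ∑ i : Fin n, (f (X i) - f (Y i)) ^ 2
          = ∑ i : Fin n, (f (X i) - g (X i)) ^ 2 :=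
            Finset.sum_congr rfl fun i _ => by rw [hfY]
        _ = ∑ i : Fin n, (f i - g i) ^ 2 := Equiv.sum_comp X (fun i => (f i - g i) ^ 2)
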